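/- arXiv:math/0612816 — 6 statements merged into one kernel-verified Lean document; each statement's English description precedes it below -/
import Mathlib

section
/- Let Γ = {u ∈ {0,1}^ℕ : ∀ k ≥ 0, ū ≤ S^k u ≤ u} and Ξ = {u ∈ {0,1}^ℕ : ∀ k ≥ 0, 0u ≤ S^k u ≤ 1u}, where 0u and 1u denote prepending the symbol 0 (resp. 1) to u. Then u ∈ Γ ∩ Ξ if and only if u = 1^∞ or there exists j ≥ 1 such that u = (1^j 0)^∞ (the periodic sequence repeating j ones followed by a zero). -/
/-- The shift map: `(shift k u) n = u (n + k)`. -/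
def shift (k : ℕ) (u : ℕ → Fin 2) : ℕ → Fin 2 := fun n => u (n + k)

/-- Bitwise complement of a binary sequence. -/
def complSeq (u : ℕ → Fin 2) : ℕ → Fin 2 := fun n => 1 - u n

/-- Prepend a digit to a binary sequence. -/
def cons (b : Fin 2) (u : ℕ → Fin 2) : ℕ → Fin 2 := fun n => Nat.casesOn n b u

/-- The set Γ of binary sequences with ū ≤ Sᵏu ≤ u (lexicographically) for all k. -/
def Gamma : Set (ℕ → Fin 2) :=
  {u | ∀ k : ℕ, toLex (complSeq u) ≤ toLex (shift k u) ∧ toLex (shift k u) ≤ toLex u}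

/-- The set Ξ of binary sequences with 0u ≤ Sᵏu ≤ 1u (lexicographically) for all k. -/
def Xi : Set (ℕ → Fin 2) :=
  {u | ∀ k : ℕ, toLex (cons 0 u) ≤ toLex (shift k u) ∧ toLex (shift k u) ≤ toLex (cons 1 u)}

/-- The periodic sequence `(1^j 0)^∞`. -/
def perSeq (j : ℕ) : ℕ → Fin 2 := fun n => if n % (j + 1) < j then 1 else 0

lemma fin2 (a : Fin 2) : a = 0 ∨ a = 1 := by fin_cases a <;> simp

lemma lexle_of_lt_at {x y : ℕ → Fin 2} (i : ℕ) (h : ∀ m < i, x m = y m) (hi : x i < y i) :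
    toLex x ≤ toLex y := le_of_lt ⟨i, h, hi⟩

lemma lexle_cases {x y : ℕ → Fin 2} (h : toLex x ≤ toLex y) :
    x = y ∨ ∃ i, (∀ m < i, x m = y m) ∧ x i < y i := by
  rcases h.lt_or_eq with h' | h'
  · exact Or.inr h'
  · exact Or.inl (toLex.injective h')

lemma tail_le {x y : ℕ → Fin 2} (h : toLex x ≤ toLex y) (h0 : x 0 = y 0) :
    toLex (fun n => x (n+1)) ≤ toLex (fun n => y (n+1)) := by
  rcases lexle_cases h with rfl | ⟨i, hpre, hi⟩
  · exact le_rfl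
  · cases i with
    | zero => rw [h0] at hi; exact absurd hi (lt_irrefl _)
    | succ m => exact lexle_of_lt_at m (fun t ht => hpre (t+1) (by omega)) hi

lemma head_one {u : ℕ → Fin 2} (hu : u ∈ Gamma) : u 0 = 1 := by
  rcases fin2 (u 0) with h | h
  · exfalso
    have h1 : toLex (complSeq u) ≤ toLex u := le_trans (hu 0).1 (hu 0).2
    rcases lexle_cases h1 with he | ⟨i, hpre, hi⟩
    · have := congrFun he 0
      simp only [complSeq, h] at this
      exact absurd this (by decide)
    · cases i with
      | zero =>
        simp only [complSeq, h] at hi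
        exact absurd hi (by decide)
      | succ m =>
        have := hpre 0 (by omega)
        simp only [complSeq, h] at this
        exact absurd this (by decide)
  · exact h

lemma period_of_zero {u : ℕ → Fin 2} (hu : u ∈ Gamma ∩ Xi) {k : ℕ} (hk : u k = 0) :
    ∀ n, u (n + (k+1)) = u n := by
  have h1 : toLex (cons 0 u) ≤ toLex (shift k u) := (hu.2 k).1
  have h0 : cons 0 u 0 = shift k u 0 := by
    show (0 : Fin 2) = u (0 + k)
    rw [Nat.zero_add, hk]
  have h2 := tail_le h1 h0
  have e1 : (fun n => cons 0 u (n+1)) = u := rfl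
  have e2 : (fun n => shift k u (n+1)) = shift (k+1) u := by
    funext n
    exact congrArg u (by omega)
  rw [e1, e2] at h2
  have h3 : toLex (shift (k+1) u) ≤ toLex u := (hu.1 (k+1)).2
  have he : shift (k+1) u = u := toLex.injective (le_antisymm h3 h2)
  intro n
  exact congrFun he n

lemma perSeq_congr {j a b : ℕ} (h : a % (j+1) = b % (j+1)) : perSeq j a = perSeq j b := by
  simp only [perSeq, h]

theorem stmt1 (u : ℕ → Fin 2) :
    u ∈ Gamma ∩ Xi ↔ u = (fun _ => 1) ∨ ∃ j : ℕ, 1 ≤ j ∧ u = perSeq j := by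
  constructor
  · intro hu
    by_cases hne : u = (fun _ => 1)
    · exact Or.inl hne
    right
    have hex : ∃ k, u k = 0 := by
      by_contra hc
      push_neg at hc
      exact hne (funext fun n => (fin2 (u n)).resolve_left (hc n))
    set j := Nat.find hex with hjdef
    have hj0 : u j = 0 := Nat.find_spec hex
    have hmin : ∀ m < j, u m = 1 := fun m hm =>
      (fin2 (u m)).resolve_left (Nat.find_min hex hm)
    have hj1 : 1 ≤ j := by
      rcases Nat.eq_zero_or_pos j with h | h
      · rw [h] at hj0
        rw [head_one hu.1] at hj0
        exact absurd hj0 (by decide)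
      · exact h
    refine ⟨j, hj1, ?_⟩
    have per : ∀ n, u (n + (j+1)) = u n := period_of_zero hu hj0
    have hmod : ∀ n, u n = u (n % (j+1)) := by
      intro n
      induction n using Nat.strong_induction_on with
      | _ n ih =>
        by_cases hlt : n < j+1
        · rw [Nat.mod_eq_of_lt hlt]
        · have h1 : n = (n - (j+1)) + (j+1) := by omega
          rw [h1, per, ih _ (by omega), Nat.add_mod_right]
    funext n
    rw [hmod n]
    show u (n % (j+1)) = if n % (j + 1) < j then 1 else 0
    by_cases hr : n % (j+1) < j
    · rw [if_pos hr]
      exact hmin _ hr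
    · rw [if_neg hr]
      have : n % (j+1) = j := by
        have := Nat.mod_lt n (show 0 < j+1 by omega)
        omega
      rw [this, hj0]
  · rintro (rfl | ⟨j, hj1, rfl⟩)
    · constructor
      · intro k
        constructor
        · refine lexle_of_lt_at 0 (fun m hm => absurd hm (by omega)) ?_
          show (0 : Fin 2) < 1
          decide
        · exact le_rfl
      · intro k
        constructor
        · refine lexle_of_lt_at 0 (fun m hm => absurd hm (by omega)) ?_
          show (0 : Fin 2) < 1
          decide
        · have : cons 1 (fun _ => (1 : Fin 2)) = fun _ => (1 : Fin 2) :=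
            funext fun n => by cases n <;> rfl
          rw [this]
          exact le_rfl
    · -- u = perSeq j, 1 ≤ j
      have hone : ∀ n, n % (j+1) < j → perSeq j n = 1 := fun n h => if_pos h
      have hzero : ∀ n, n % (j+1) = j → perSeq j n = 0 := fun n h => by
        simp only [perSeq, h, lt_irrefl, if_false]
      have modadd : ∀ k m : ℕ, (m + k) % (j+1) = (m + k % (j+1)) % (j+1) := by
        intro k m
        conv_lhs => rw [← Nat.mod_add_div k (j+1), ← Nat.add_assoc, Nat.add_mul_mod_self_left]
      have hmodlt : ∀ k : ℕ, k % (j+1) < j + 1 := fun k => Nat.mod_lt k (by omega)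
      have hsmall : ∀ m : ℕ, m < j + 1 → m % (j+1) = m := fun m h => Nat.mod_eq_of_lt h
      constructor
      · intro k
        rcases Nat.lt_or_ge (k % (j+1)) j with hr | hr
        · -- k % (j+1) < j : u k = 1
          constructor
          · -- complSeq u ≤ shift k u : first position 0 < 1
            refine lexle_of_lt_at 0 (fun m hm => absurd hm (by omega)) ?_
            have h1 : complSeq (perSeq j) 0 = 0 := by
              show 1 - perSeq j 0 = 0
              rw [hone 0 (by rw [hsmall 0 (by omega)]; omega)]
              decide
            have h2 : shift k (perSeq j) 0 = 1 := by
              show perSeq j (0 + k) = 1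
              exact hone _ (by rw [modadd k 0, Nat.zero_add, hsmall _ (hmodlt k)]; omega)
            rw [h1, h2]
            decide
          · -- shift k u ≤ u
            by_cases hr0 : k % (j+1) = 0
            · have : shift k (perSeq j) = perSeq j := funext fun n =>
                perSeq_congr (by rw [modadd k n, hr0, Nat.add_zero])
              rw [this]
            · refine lexle_of_lt_at (j - k % (j+1)) ?_ ?_
              · intro m hm
                have h1 : shift k (perSeq j) m = 1 := by
                  show perSeq j (m + k) = 1
                  refine hone _ ?_
                  rw [modadd k m, hsmall _ (by omega)]
                  omega
                have h2 : perSeq j m = 1 := hone m (by rw [hsmall m (by omega)]; omega)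
                rw [h1, h2]
              · have h1 : shift k (perSeq j) (j - k % (j+1)) = 0 := by
                  show perSeq j (j - k % (j+1) + k) = 0
                  refine hzero _ ?_
                  rw [modadd k _, show j - k % (j+1) + k % (j+1) = j by omega,
                    hsmall j (by omega)]
                have h2 : perSeq j (j - k % (j+1)) = 1 :=
                  hone _ (by rw [hsmall _ (by omega)]; omega)
                rw [h1, h2]
                decide
        · -- k % (j+1) = j : u k = 0
          have hrj : k % (j+1) = j := by have := hmodlt k; omega
          constructor
          · -- complSeq u ≤ shift k u pointwise
            apply Pi.toLex_monotone
            intro n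
            by_cases hn : n % (j+1) < j
            · have h1 : complSeq (perSeq j) n = 0 := by
                show 1 - perSeq j n = 0
                rw [hone n hn]
                decide
              rw [h1]
              exact Fin.zero_le _
            · have hnj : n % (j+1) = j := by have := hmodlt n; omega
              have h1 : complSeq (perSeq j) n = 1 := by
                show 1 - perSeq j n = 1
                rw [hzero n hnj]
                decide
              have h2 : shift k (perSeq j) n = 1 := by
                show perSeq j (n + k) = 1
                refine hone _ ?_
                rw [modadd k n, hrj, Nat.add_mod, hnj, hsmall j (by omega),
                  show j + j = (j-1) + (j+1) by omega, Nat.add_mod_right,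
                  hsmall (j-1) (by omega)]
                omega
              rw [h1, h2]
          · -- shift k u ≤ u : first position 0 < 1
            refine lexle_of_lt_at 0 (fun m hm => absurd hm (by omega)) ?_
            have h1 : shift k (perSeq j) 0 = 0 := by
              show perSeq j (0 + k) = 0
              exact hzero _ (by rw [modadd k 0, Nat.zero_add, hsmall _ (hmodlt k)]; exact hrj)
            have h2 : perSeq j 0 = 1 := hone 0 (by rw [hsmall 0 (by omega)]; omega)
            rw [h1, h2]
            decide
      · intro k
        rcases Nat.lt_or_ge (k % (j+1)) j with hr | hr
        · constructor
          · -- cons 0 u ≤ shift k u : 0 < 1 at position 0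
            refine lexle_of_lt_at 0 (fun m hm => absurd hm (by omega)) ?_
            have h2 : shift k (perSeq j) 0 = 1 := by
              show perSeq j (0 + k) = 1
              exact hone _ (by rw [modadd k 0, Nat.zero_add, hsmall _ (hmodlt k)]; omega)
            show cons 0 (perSeq j) 0 < shift k (perSeq j) 0
            rw [h2]
            show (0 : Fin 2) < 1
            decide
          · -- shift k u ≤ cons 1 u : first diff at j - r
            refine lexle_of_lt_at (j - k % (j+1)) ?_ ?_
            · intro m hm
              have h1 : shift k (perSeq j) m = 1 := by
                show perSeq j (m + k) = 1
                refine hone _ ?_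
                rw [modadd k m, hsmall _ (by omega)]
                omega
              rw [h1]
              cases m with
              | zero => rfl
              | succ t =>
                show (1 : Fin 2) = perSeq j t
                rw [hone t (by rw [hsmall t (by omega)]; omega)]
            · have h1 : shift k (perSeq j) (j - k % (j+1)) = 0 := by
                show perSeq j (j - k % (j+1) + k) = 0
                refine hzero _ ?_
                rw [modadd k _, show j - k % (j+1) + k % (j+1) = j by omega,
                  hsmall j (by omega)]
              rw [h1]
              have hge1 : 1 ≤ j - k % (j+1) := by omega
              rcases Nat.exists_eq_add_of_le hge1 with ⟨t, ht⟩
              rw [show j - k % (j+1) = t + 1 by omega]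
              show (0 : Fin 2) < perSeq j t
              rw [hone t (by rw [hsmall t (by omega)]; omega)]
              decide
        · have hrj : k % (j+1) = j := by have := hmodlt k; omega
          constructor
          · -- cons 0 u = shift k u
            have : cons 0 (perSeq j) = shift k (perSeq j) := by
              funext n
              cases n with
              | zero =>
                show (0 : Fin 2) = perSeq j (0 + k)
                rw [hzero _ (by rw [modadd k 0, Nat.zero_add, hsmall _ (hmodlt k)]; exact hrj)]
              | succ m =>
                show perSeq j m = perSeq j (m + 1 + k)
                refine perSeq_congr ?_
                rw [modadd k (m+1), hrj, show m + 1 + j = m + (j+1) by omega,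
                  Nat.add_mod_right]
            rw [this]
          · -- shift k u ≤ cons 1 u : 0 < 1 at position 0
            refine lexle_of_lt_at 0 (fun m hm => absurd hm (by omega)) ?_
            have h1 : shift k (perSeq j) 0 = 0 := by
              show perSeq j (0 + k) = 0
              exact hzero _ (by rw [modadd k 0, Nat.zero_add, hsmall _ (hmodlt k)]; exact hrj)
            show shift k (perSeq j) 0 < cons 1 (perSeq j) 0
            rw [h1]
            show (0 : Fin 2) < 1
            decide
end

section
/- Let v ∈ {0,1}^ℕ satisfy 0v ≤ S^k v ≤ 1v for all k ≥ 0 (i.e., v ∈ Ξ), and suppose v_0 = 1. Then the sequence u = 1v (obtained by prepending 1 to v) satisfies ū ≤ S^k u ≤ u for all k ≥ 0 (i.e., u ∈ Γ). -/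
lemma lt_of_lt_zero {x y : ℕ → Fin 2} (h : x 0 < y 0) : toLex x < toLex y :=
  ⟨0, fun j hj => absurd hj (Nat.not_lt_zero j), h⟩

lemma cons_mono {b : Fin 2} {x y : ℕ → Fin 2} (h : toLex x ≤ toLex y) :
    toLex (cons b x) ≤ toLex (cons b y) := by
  rcases eq_or_lt_of_le h with heq | hlt
  · exact le_of_eq (by
      have : x = y := congrArg ofLex heq
      rw [this])
  · obtain ⟨i, hji, hi⟩ := hlt
    refine le_of_lt ⟨i + 1, fun j hj => ?_, hi⟩
    cases j with
    | zero => rfl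
    | succ j => exact hji j (Nat.lt_of_succ_lt_succ hj)

lemma complSeq_cons (b : Fin 2) (v : ℕ → Fin 2) :
    complSeq (cons b v) = cons (1 - b) (complSeq v) := by
  funext n; cases n <;> rfl

lemma shift_cons_succ (k : ℕ) (b : Fin 2) (v : ℕ → Fin 2) :
    shift (k + 1) (cons b v) = shift k v := by
  funext n; rfl

theorem stmt4 (v : ℕ → Fin 2) (hv : v ∈ Xi) (hv0 : v 0 = 1) :
    cons 1 v ∈ Gamma := by
  have hcompl : toLex (complSeq v) ≤ toLex v :=
    le_of_lt (lt_of_lt_zero (by simp [complSeq, hv0]))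
  have hlow : toLex (complSeq (cons 1 v)) ≤ toLex (cons 0 v) := by
    rw [complSeq_cons]
    have : (1 - 1 : Fin 2) = 0 := rfl
    rw [this]
    exact cons_mono hcompl
  intro k
  cases k with
  | zero =>
    constructor
    · exact le_of_lt (lt_of_lt_zero (by
        show complSeq (cons 1 v) 0 < cons 1 v 0
        simp [complSeq, cons]))
    · exact le_rfl
  | succ k =>
    rw [shift_cons_succ]
    exact ⟨hlow.trans (hv k).1, (hv k).2⟩
end

section
/- Let u ∈ Γ, i.e., ū ≤ S^k u ≤ u for all k ≥ 0, and suppose there is a binary sequence v such that 0v ≤ S^k u ≤ 1v for all k ≥ 0, with additionally 1v = sup_k S^k u and 0v = inf_k S^k u. Then v_0 = 1 and u = 1v. -/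
theorem stmt7 (u v : ℕ → Fin 2) (hu : u ∈ Gamma)
    (hbound : ∀ k : ℕ, toLex (cons 0 v) ≤ toLex (shift k u) ∧
      toLex (shift k u) ≤ toLex (cons 1 v))
    (hsup : IsLUB {x : Lex (ℕ → Fin 2) | ∃ k : ℕ, x = toLex (shift k u)} (toLex (cons 1 v)))
    (hinf : IsGLB {x : Lex (ℕ → Fin 2) | ∃ k : ℕ, x = toLex (shift k u)} (toLex (cons 0 v))) :
    v 0 = 1 ∧ u = cons 1 v := by
  have hshift0 : shift 0 u = u := funext fun n => by simp [shift]
  -- u is an upper bound of the set of shifts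
  have hub : toLex (cons 1 v) ≤ toLex u := by
    apply hsup.2
    rintro x ⟨k, rfl⟩
    exact (hu k).2
  have hle : toLex u ≤ toLex (cons 1 v) := by
    have := (hbound 0).2
    rwa [hshift0] at this
  have hueq : u = cons 1 v := by
    have : toLex u = toLex (cons 1 v) := le_antisymm hle hub
    exact toLex.injective this
  refine ⟨?_, hueq⟩
  -- complSeq u is a lower bound
  have hlb : toLex (complSeq u) ≤ toLex (cons 0 v) := by
    apply hinf.2
    rintro x ⟨k, rfl⟩
    exact (hu k).1
  by_contra hv0
  have hv0' : v 0 = 0 := by omega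
  have hcompl : complSeq u = cons 0 (complSeq v) := by
    funext n
    cases n with
    | zero => simp [complSeq, cons, hueq]
    | succ m => simp [complSeq, cons, hueq]
  rw [hcompl] at hlb
  -- derive contradiction: cons 0 v < cons 0 (complSeq v) since they agree at 0 and differ at 1
  have hlt : toLex (cons 0 v) < toLex (cons 0 (complSeq v)) := by
    refine ⟨1, fun j hj => ?_, ?_⟩
    · interval_cases j <;> rfl
    · show cons 0 v 1 < cons 0 (complSeq v) 1
      simp [cons, complSeq, hv0']
  exact absurd hlb (not_le_of_gt hlt)
end

section
/- Let m be a nonempty finite binary word and let t ∈ Γ = {u : ∀ k, ū ≤ S^k u ≤ u} be a sequence beginning with the word m·m̄ (m followed by its bitwise complement). Then t = (m m̄)^∞, the periodic sequence with period m m̄. -/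
lemma fin2_sub_sub (b : Fin 2) : 1 - (1 - b) = b := by revert b; decide

lemma lex_lt_of_agree {x y : ℕ → Fin 2} (i : ℕ) (hagree : ∀ j < i, x j = y j)
    (hlt : x i < y i) : toLex x < toLex y :=
  ⟨i, hagree, hlt⟩

theorem stmt8 (m : List (Fin 2)) (hm : m ≠ []) (t : ℕ → Fin 2) (ht : t ∈ Gamma)
    (hbegin : ∀ i < (m ++ m.map (fun b => 1 - b)).length,
      t i = (m ++ m.map (fun b => 1 - b)).getD i 0) :
    ∀ n : ℕ, t n = (m ++ m.map (fun b => 1 - b)).getD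
      (n % (m ++ m.map (fun b => 1 - b)).length) 0 := by
  set L := m.length with hL
  have hL1 : 1 ≤ L := List.length_pos_iff.mpr hm
  set w := m ++ m.map (fun b => 1 - b) with hw
  have hwlen : w.length = 2 * L := by
    simp [hw, List.length_append, List.length_map]; ring
  set W : ℕ → Fin 2 := fun n => w.getD (n % w.length) 0 with hW
  -- periodicity
  have hper : ∀ n, W (n + 2 * L) = W n := by
    intro n
    simp only [hW, hwlen]
    rw [Nat.add_mod_right]
  -- complement property: W (n + L) = 1 - W n
  have hcomplb : ∀ j < 2 * L, w.getD ((j + L) % (2 * L)) 0 = 1 - w.getD j 0 := by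
    intro j hj
    rcases lt_or_ge j L with h | h
    · have h1 : (j + L) % (2 * L) = j + L := Nat.mod_eq_of_lt (by omega)
      rw [h1]
      have hjw : j < w.length := by omega
      have hjLw : j + L < w.length := by omega
      rw [List.getD_eq_getElem w 0 hjw, List.getD_eq_getElem w 0 hjLw]
      have e1 : w[j] = m[j]'(by omega) := List.getElem_append_left (by omega)
      have e2 : w[j + L]'hjLw = (m.map (fun b => 1 - b))[j + L - L]'(by
          simp [List.length_map]; omega) := List.getElem_append_right (by omega)
      simp only [Nat.add_sub_cancel, List.getElem_map] at e2
      rw [e1, e2]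
    · have h1 : (j + L) % (2 * L) = j - L := by
        have : j + L = (j - L) + 1 * (2 * L) := by omega
        rw [this, Nat.add_mul_mod_self_right, Nat.mod_eq_of_lt (by omega)]
      rw [h1]
      have hjw : j < w.length := by omega
      have hjLw : j - L < w.length := by omega
      rw [List.getD_eq_getElem w 0 hjw, List.getD_eq_getElem w 0 hjLw]
      have e1 : w[j - L]'hjLw = m[j - L]'(by omega) := List.getElem_append_left (by omega)
      have e2 : w[j]'hjw = (m.map (fun b => 1 - b))[j - L]'(by
          simp [List.length_map]; omega) := List.getElem_append_right (by omega)
      simp only [List.getElem_map] at e2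
      rw [e1, e2, fin2_sub_sub]
  have hcompl : ∀ n, W (n + L) = 1 - W n := by
    intro n
    have hj : n % (2 * L) < 2 * L := Nat.mod_lt _ (by omega)
    have : (n + L) % (2 * L) = ((n % (2 * L)) + L) % (2 * L) := by
      conv_lhs => rw [← Nat.mod_add_div n (2 * L)]
      rw [Nat.add_right_comm, Nat.add_mul_mod_self_left]
    simp only [hW, hwlen, this]
    exact hcomplb _ hj
  -- base case from hbegin
  have hbase : ∀ i < 2 * L, t i = W i := by
    intro i hi
    have := hbegin i (by omega)
    simpa [hW, hwlen, Nat.mod_eq_of_lt hi] using this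
  -- main induction
  intro n
  induction n using Nat.strong_induction_on with
  | _ n IH =>
  show t n = W n
  rcases lt_or_ge n (2 * L) with hn | hn
  · exact hbase n hn
  by_contra hne
  set r := n % (2 * L) with hr
  have hrlt : r < 2 * L := Nat.mod_lt _ (by omega)
  have hWn : W n = W r := by
    simp only [hW, hwlen, hr]
    rw [Nat.mod_mod_of_dvd n dvd_rfl]
  have hWr : ∀ i, W (i + (n - r)) = W i := by
    intro i
    have hd : (2 * L) ∣ (n - r) := by
      have := Nat.mod_add_div n (2 * L)
      refine ⟨n / (2 * L), by omega⟩
    obtain ⟨c, hc⟩ := hd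
    simp only [hW, hc, hwlen, Nat.add_mul_mod_self_left]
  rcases (by decide : ∀ b : Fin 2, b = 0 ∨ b = 1) (t n) with h0 | h1
  · -- t n = 0, so W n = 1 (case B)
    have hWn1 : W n = 1 := by
      rcases (by decide : ∀ b : Fin 2, b = 0 ∨ b = 1) (W n) with h | h
      · exact absurd (h0.trans h.symm) hne
      · exact h
    set s := n - L with hs
    have hsL : s + L = n := by omega
    have hsn : s < n := by omega
    have hWs : W s = 0 := by
      have h1 : W (s + L) = 1 - W s := hcompl s
      rw [hsL, hWn1] at h1
      have := fin2_sub_sub (W s)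
      rw [← h1] at this
      simpa using this.symm
    have hlt : toLex (shift L t) < toLex (complSeq t) := by
      apply lex_lt_of_agree s
      · intro j hj
        have hjn : j + L < n := by omega
        have e1 : shift L t j = W (j + L) := IH _ hjn
        have e3 : t j = W j := IH j (by omega)
        rw [e1, hcompl j]
        simp only [complSeq, e3]
      · have e1 : shift L t s = t n := by simp only [shift, hsL]
        rw [e1, h0]
        have e2 : complSeq t s = 1 := by
          have e3 : t s = W s := IH s hsn
          simp only [complSeq, e3, hWs]
          decide
        rw [e2]
        decide
    exact absurd (ht L).1 (not_le_of_gt hlt)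
  · -- t n = 1, so W n = 0 (case A)
    have hWn0 : W n = 0 := by
      rcases (by decide : ∀ b : Fin 2, b = 0 ∨ b = 1) (W n) with h | h
      · exact h
      · exact absurd (h1.trans h.symm) hne
    have hWrn : W r = W n := by
      simp only [hW, hwlen]
      rw [Nat.mod_eq_of_lt (by simpa [hwlen] using hrlt)]
    have hrn : r < n := by omega
    have hlt : toLex t < toLex (shift (n - r) t) := by
      apply lex_lt_of_agree r
      · intro j hj
        have hjn : j + (n - r) < n := by omega
        have e1 : shift (n - r) t j = W (j + (n - r)) := IH _ hjn
        rw [hbase j (by omega), ← hWr j, e1]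
      · have e1 : shift (n - r) t r = t n := by
          simp only [shift]
          congr 1
          omega
        rw [e1, h1, hbase r hrlt, hWrn, hWn0]
        decide
    exact absurd (ht (n - r)).2 (not_le_of_gt hlt)
end

section
/- Let u ∈ Γ = {u : ∀ k, ū ≤ S^k u ≤ u} with u ≠ 1^∞, and write u = 1^j 0 z with j ≥ 1. If additionally u ∈ Ξ = {u : ∀ k, 0u ≤ S^k u ≤ 1u}, then z = u, and consequently u = (1^j 0)^∞. -/
lemma cons_le_cons_iff (b : Fin 2) (x y : ℕ → Fin 2)
    (h : toLex (cons b x) ≤ toLex (cons b y)) : toLex x ≤ toLex y := by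
  rcases h.lt_or_eq with h | h
  · obtain ⟨i, hlt, hi⟩ := h
    cases i with
    | zero => exact absurd hi (lt_irrefl b)
    | succ m =>
      exact le_of_lt ⟨m, fun k hk => hlt (k + 1) (by omega), hi⟩
  · have : cons b x = cons b y := congrArg ofLex h
    have hxy : x = y := funext fun n => congrFun this (n + 1)
    exact le_of_eq (congrArg toLex hxy)

theorem stmt13 (u : ℕ → Fin 2) (hu : u ∈ Gamma) (hXi : u ∈ Xi)
    (j : ℕ) (hj : 1 ≤ j) (hones : ∀ i < j, u i = 1) (hzero : u j = 0) :
    shift (j + 1) u = u ∧ u = perSeq j := by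
  -- shift j u = cons 0 (shift (j+1) u)
  have hdecomp : shift j u = cons 0 (shift (j + 1) u) := by
    funext n
    cases n with
    | zero => simpa [shift, cons] using hzero
    | succ m => simp [shift, cons]; ring_nf
  -- u ≤ z
  have h1 : toLex u ≤ toLex (shift (j + 1) u) := by
    have := (hXi j).1
    rw [hdecomp] at this
    exact cons_le_cons_iff 0 u (shift (j + 1) u) this
  -- z ≤ u
  have h2 : toLex (shift (j + 1) u) ≤ toLex u := (hu (j + 1)).2
  have hz : shift (j + 1) u = u := by
    have := le_antisymm h2 h1
    exact congrArg ofLex this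
  refine ⟨hz, ?_⟩
  have hper : ∀ m, u (m + (j + 1)) = u m := fun m => congrFun hz m
  funext n
  induction n using Nat.strong_induction_on with
  | _ n ih =>
    by_cases hn : n < j + 1
    · have hmod : n % (j + 1) = n := Nat.mod_eq_of_lt hn
      by_cases hnj : n < j
      · simp [perSeq, hmod, hnj, hones n hnj]
      · have : n = j := by omega
        subst this
        simp [perSeq, hmod, hzero]
    · have hm : n - (j + 1) < n := by omega
      have heq : n - (j + 1) + (j + 1) = n := by omega
      have : u n = u (n - (j + 1)) := by
        conv_lhs => rw [← heq]
        exact hper _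
      rw [this, ih _ hm]
      have : n % (j + 1) = (n - (j + 1)) % (j + 1) := by
        conv_lhs => rw [← heq]
        rw [Nat.add_mod_right]
      simp [perSeq, this]
end

section
/- Let u ∈ {0,1}^ℕ be purely periodic (i.e., there exists p ≥ 1 with S^p u = u) and belong to Γ = {u : ∀ k, ū ≤ S^k u ≤ u}. Then u does not satisfy the strict condition ū < S^k u < u for all k ≥ 0; in fact S^p u = u gives equality at k = p. Conversely, if u ∈ Γ is not purely periodic, then ū < S^k u < u for all k ≥ 1 and ū < u, i.e., u ∈ Γ₁ where Γ₁ = {u : ∀ k ≥ 1, ū < S^k u < u and ū < u}. -/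
theorem stmt16 (u : ℕ → Fin 2) (hu : u ∈ Gamma) :
    ((∃ p : ℕ, 1 ≤ p ∧ shift p u = u) →
      ¬ (∀ k : ℕ, toLex (complSeq u) < toLex (shift k u) ∧ toLex (shift k u) < toLex u)) ∧
    ((¬ ∃ p : ℕ, 1 ≤ p ∧ shift p u = u) →
      (∀ k : ℕ, 1 ≤ k →
        toLex (complSeq u) < toLex (shift k u) ∧ toLex (shift k u) < toLex u) ∧
      toLex (complSeq u) < toLex u) := by
  constructor
  · rintro ⟨p, hp, hsp⟩ hstrict
    have h := (hstrict p).2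
    rw [hsp] at h
    exact lt_irrefl _ h
  · intro hnp
    have key : ∀ k : ℕ, 1 ≤ k →
        toLex (complSeq u) < toLex (shift k u) ∧ toLex (shift k u) < toLex u := by
      intro k hk
      obtain ⟨h1, h2⟩ := hu k
      have inv : ∀ x : Fin 2, 1 - (1 - x) = x := by decide
      refine ⟨lt_of_le_of_ne h1 fun h => hnp ⟨2 * k, by omega, ?_⟩,
        lt_of_le_of_ne h2 fun h => hnp ⟨k, hk, toLex.injective h⟩⟩
      have heq : complSeq u = shift k u := toLex.injective h
      have hval : ∀ n, shift k u n = 1 - u n := fun n => (congrFun heq n).symm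
      funext n
      show u (n + 2 * k) = u n
      calc u (n + 2 * k) = shift k u (n + k) := by simp only [shift]; congr 1; ring
        _ = 1 - u (n + k) := hval _
        _ = 1 - shift k u n := rfl
        _ = 1 - (1 - u n) := by rw [hval]
        _ = u n := inv _
    exact ⟨key, lt_trans (key 1 le_rfl).1 (key 1 le_rfl).2⟩
end
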